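/- Let A ∈ ℂ^{n×n} be Schur stable (ρ(A) < 1), B ∈ ℂ^{n×m}, and let w ∈ l₂ with x₀ = 0, x_{k+1} = A x_k + B w_k. Define the gramian V = ∑_{k=0}^∞ [x_k; w_k][x_k; w_k]*. Then [A B] V [A B]* = [I 0] V [I 0]*, i.e., V lies in the cone 𝒞 = {V ⪰ 0 : [A B] V [A B]* = [I 0] V [I 0]*}. -/

import Mathlib

open Matrix
open scoped ComplexOrder

/-- Outer product `v v*` of a vector. -/
noncomputable def outer {ι : Type*} [Fintype ι] (v : ι → ℂ) : Matrix ι ι ℂ :=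
  Matrix.of fun i j => v i * star (v j)

section Aux

open Filter Finset

/-- ℓ² stability of a linear recursion driven by an ℓ² input, given a power of the
transition operator with norm `< 1`. -/
private lemma l2_state {E : Type*} [NormedAddCommGroup E] [NormedSpace ℂ E]
    (L : E →L[ℂ] E) (N : ℕ) (hN1 : 1 ≤ N) (hLN : ‖L ^ N‖ < 1)
    (u : ℕ → E) (hu : Summable (fun k => ‖u k‖ ^ 2))
    (xE : ℕ → E) (h0 : xE 0 = 0) (hrec : ∀ k, xE (k + 1) = L (xE k) + u k) :
    Summable (fun k => ‖xE k‖ ^ 2) := by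
  -- the adapted constants
  set q : ℝ := max ‖L ^ N‖ (1/2) with hq
  have hq0 : 0 < q := lt_max_of_lt_right (by norm_num)
  have hq1 : q < 1 := max_lt hLN (by norm_num)
  have hLq : ‖L ^ N‖ ≤ q := le_max_left _ _
  set s : ℝ := q ^ ((1:ℝ)/N) with hs
  have hs0 : 0 < s := Real.rpow_pos_of_pos hq0 _
  have hs1 : s < 1 := Real.rpow_lt_one hq0.le hq1 (by positivity)
  have hsN : s ^ N = q := by
    rw [hs, ← Real.rpow_natCast (q ^ ((1:ℝ)/N)) N, ← Real.rpow_mul hq0.le]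
    rw [one_div, inv_mul_cancel₀ (by positivity : (N:ℝ) ≠ 0),
      Real.rpow_one]
  -- the adapted seminorm
  set c : ℕ → ℝ := fun k => ∑ j ∈ range N, ‖(L ^ j) (xE k)‖ / s ^ j with hc
  have hterm : ∀ (v : E) (j : ℕ), 0 ≤ ‖(L ^ j) v‖ / s ^ j := fun v j => by positivity
  have hcnn : ∀ k, 0 ≤ c k := fun k => Finset.sum_nonneg fun j _ => hterm _ j
  have hxc : ∀ k, ‖xE k‖ ≤ c k := by
    intro k
    have h00 : ‖(L ^ 0) (xE k)‖ / s ^ 0 = ‖xE k‖ := by simp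
    calc ‖xE k‖ = ‖(L ^ 0) (xE k)‖ / s ^ 0 := h00.symm
      _ ≤ c k := Finset.single_le_sum (fun j _ => hterm _ j)
            (Finset.mem_range.mpr hN1)
  have hc0 : c 0 = 0 := by
    simp [hc, h0]
  -- contraction estimate for the adapted seminorm
  have hshift : ∀ v : E, (∑ j ∈ range N, ‖(L ^ j) (L v)‖ / s ^ j) ≤
      s * ∑ j ∈ range N, ‖(L ^ j) v‖ / s ^ j := by
    intro v
    set h : ℕ → ℝ := fun i => ‖(L ^ i) v‖ / s ^ i with hh
    have h1 : ∀ j, ‖(L ^ j) (L v)‖ / s ^ j = s * h (j + 1) := by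
      intro j
      have : (L ^ j) (L v) = (L ^ (j+1)) v := by
        rw [pow_succ, ContinuousLinearMap.mul_apply]
      rw [this, hh]
      field_simp
      ring
    have hN0 : h N ≤ h 0 := by
      have : ‖(L ^ N) v‖ ≤ q * ‖v‖ :=
        le_trans ((L ^ N).le_opNorm v) (by
          exact mul_le_mul_of_nonneg_right hLq (norm_nonneg v))
      simp only [hh, pow_zero, div_one, pow_zero, ContinuousLinearMap.one_apply]
      rw [hsN, div_le_iff₀ hq0]
      simpa [mul_comm] using this
    calc (∑ j ∈ range N, ‖(L ^ j) (L v)‖ / s ^ j)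
        = ∑ j ∈ range N, s * h (j + 1) := by
          exact Finset.sum_congr rfl fun j _ => h1 j
      _ = s * ∑ j ∈ range N, h (j + 1) := by rw [Finset.mul_sum]
      _ ≤ s * ∑ j ∈ range N, h j := by
          apply mul_le_mul_of_nonneg_left _ hs0.le
          have e1 : ∑ j ∈ range (N+1), h j = (∑ j ∈ range N, h (j+1)) + h 0 :=
            Finset.sum_range_succ' h N
          have e2 : ∑ j ∈ range (N+1), h j = (∑ j ∈ range N, h j) + h N :=
            Finset.sum_range_succ h N
          linarith
  -- bound for the input term
  set C : ℝ := ∑ j ∈ range N, ‖L ^ j‖ / s ^ j with hC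
  have hCnn : 0 ≤ C := Finset.sum_nonneg fun j _ => by positivity
  have hCu : ∀ v : E, (∑ j ∈ range N, ‖(L ^ j) v‖ / s ^ j) ≤ C * ‖v‖ := by
    intro v
    rw [hC, Finset.sum_mul]
    refine Finset.sum_le_sum fun j _ => ?_
    rw [div_mul_eq_mul_div]
    exact div_le_div_of_nonneg_right ((L ^ j).le_opNorm v) (by positivity)
  -- the recursion
  have hrec2 : ∀ k, c (k + 1) ≤ s * c k + C * ‖u k‖ := by
    intro k
    have : c (k+1) ≤ (∑ j ∈ range N, ‖(L ^ j) (L (xE k))‖ / s ^ j)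
        + ∑ j ∈ range N, ‖(L ^ j) (u k)‖ / s ^ j := by
      rw [hc]
      simp only [hrec k]
      rw [← Finset.sum_add_distrib]
      refine Finset.sum_le_sum fun j _ => ?_
      rw [← add_div]
      apply div_le_div_of_nonneg_right _ (by positivity)
      rw [map_add]
      exact norm_add_le _ _
    calc c (k+1) ≤ _ := this
      _ ≤ s * c k + C * ‖u k‖ := add_le_add (hshift (xE k)) (hCu (u k))
  -- squared recursion
  set K : ℕ → ℝ := fun k => (C * ‖u k‖) ^ 2 / (1 - s) with hK
  have hKnn : ∀ k, 0 ≤ K k := fun k => by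
    apply div_nonneg (sq_nonneg _); linarith
  have hKsum : Summable K := by
    have : Summable (fun k => (C ^ 2 / (1 - s)) * ‖u k‖ ^ 2) := hu.mul_left _
    refine this.congr fun k => ?_
    rw [hK]; ring
  set e : ℕ → ℝ := fun k => (c k) ^ 2 with he
  have henn : ∀ k, 0 ≤ e k := fun k => sq_nonneg _
  have herec : ∀ k, e (k + 1) ≤ s * e k + K k := by
    intro k
    have h1 := hrec2 k
    set b : ℝ := C * ‖u k‖ with hb
    have hbnn : 0 ≤ b := mul_nonneg hCnn (norm_nonneg _)
    have h2 : e (k + 1) ≤ (s * c k + b) ^ 2 := by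
      rw [he]
      apply pow_le_pow_left₀ (hcnn _) h1
    have hKb : K k * (1 - s) = b ^ 2 := by
      rw [hK, hb, div_mul_cancel₀ _ (by linarith : (1:ℝ) - s ≠ 0)]
    have hinner : 0 ≤ (1 - s) * ((1 - s) * (c k) ^ 2 - 2 * c k * b + K k) := by
      nlinarith [sq_nonneg ((1 - s) * c k - b)]
    have hpos : 0 ≤ (1 - s) * (c k) ^ 2 - 2 * c k * b + K k :=
      nonneg_of_mul_nonneg_right hinner (by linarith)
    have hek : e k = c k ^ 2 := rfl
    nlinarith [h2, hKb, hek, mul_nonneg hs0.le hpos]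
  -- bounded partial sums
  set D : ℝ := ∑' k, K k with hD
  have hDnn : 0 ≤ D := tsum_nonneg hKnn
  have hTrec : ∀ M, (∑ k ∈ range M, e k) ≤ s * (∑ k ∈ range M, e k) + D := by
    intro M
    have hmono : (∑ k ∈ range M, e k) ≤ ∑ k ∈ range (M + 1), e k := by
      rw [Finset.sum_range_succ]
      linarith [henn M]
    have h1 : (∑ k ∈ range (M + 1), e k) = (∑ k ∈ range M, e (k + 1)) + e 0 :=
      Finset.sum_range_succ' e M
    have he0 : e 0 = 0 := by rw [he]; simp [hc0]
    have h2 : (∑ k ∈ range M, e (k + 1)) ≤ (∑ k ∈ range M, (s * e k + K k)) :=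
      Finset.sum_le_sum fun k _ => herec k
    have h3 : (∑ k ∈ range M, (s * e k + K k)) =
        s * (∑ k ∈ range M, e k) + ∑ k ∈ range M, K k := by
      rw [Finset.sum_add_distrib, Finset.mul_sum]
    have h4 : (∑ k ∈ range M, K k) ≤ D := Summable.sum_le_tsum _ (fun k _ => hKnn k) hKsum
    linarith
  have hTbdd : ∀ M, (∑ k ∈ range M, e k) ≤ D / (1 - s) := by
    intro M
    have := hTrec M
    rw [le_div_iff₀ (by linarith : (0:ℝ) < 1 - s)]
    nlinarith
  have hesum : Summable e := summable_of_sum_range_le henn hTbdd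
  refine hesum.of_nonneg_of_le (fun k => by positivity) fun k => ?_
  exact pow_le_pow_left₀ (norm_nonneg _) (hxc k) 2

private lemma conj_outer {ι κ : Type*} [Fintype ι] [Fintype κ] (M : Matrix κ ι ℂ) (v : ι → ℂ) :
    M * outer v * Mᴴ = outer (M *ᵥ v) := by
  ext i j
  simp only [outer, Matrix.mul_apply, Matrix.of_apply, conjTranspose_apply, Matrix.mulVec,
    dotProduct, star_sum, star_mul', Finset.mul_sum, Finset.sum_mul]
  refine Finset.sum_congr rfl fun b _ => Finset.sum_congr rfl fun a _ => by ring

private lemma outer_herm {ι : Type*} [Fintype ι] (v : ι → ℂ) : (outer v)ᴴ = outer v := by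
  ext i j
  simp [outer, mul_comm]

private lemma outer_zero {ι : Type*} [Fintype ι] : outer (0 : ι → ℂ) = 0 := by
  ext i j; simp [outer]

/-- `X ↦ M X N` as a continuous linear map on matrices. -/
private noncomputable def conjLM {ι κ : Type*} [Fintype ι] [Fintype κ]
    (M : Matrix κ ι ℂ) (N : Matrix ι κ ℂ) : Matrix ι ι ℂ →L[ℂ] Matrix κ κ ℂ :=
  LinearMap.toContinuousLinearMap
  { toFun := fun X => M * X * N
    map_add' := fun X Y => by simp [Matrix.mul_add, Matrix.add_mul]
    map_smul' := fun c X => by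
      simp [Matrix.mul_smul, Matrix.smul_mul] }

private lemma conjLM_apply {ι κ : Type*} [Fintype ι] [Fintype κ]
    (M : Matrix κ ι ℂ) (N : Matrix ι κ ℂ) (X : Matrix ι ι ℂ) :
    conjLM M N X = M * X * N := rfl

/-- `X ↦ y* X y` as a continuous linear map on matrices. -/
private noncomputable def quadLM {ι : Type*} [Fintype ι] (y : ι → ℂ) :
    Matrix ι ι ℂ →L[ℂ] ℂ :=
  LinearMap.toContinuousLinearMap
  { toFun := fun X => star y ⬝ᵥ (X *ᵥ y)
    map_add' := fun X Y => by simp [Matrix.add_mulVec, dotProduct_add]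
    map_smul' := fun c X => by
      show star y ⬝ᵥ (c • X) *ᵥ y = c • (star y ⬝ᵥ X *ᵥ y)
      rw [Matrix.smul_mulVec, dotProduct_smul]
  }

private lemma quadLM_apply {ι : Type*} [Fintype ι] (y : ι → ℂ) (X : Matrix ι ι ℂ) :
    quadLM y X = star y ⬝ᵥ (X *ᵥ y) := rfl

private lemma quad_outer {ι : Type*} [Fintype ι] (y v : ι → ℂ) :
    quadLM y (outer v) = star (star y ⬝ᵥ v) * (star y ⬝ᵥ v) := by
  simp only [quadLM, LinearMap.coe_toContinuousLinearMap', LinearMap.coe_mk, AddHom.coe_mk,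
    outer, dotProduct, Matrix.mulVec, Pi.star_apply, star_sum, star_mul',
    Finset.mul_sum, Finset.sum_mul, Matrix.of_apply]
  refine Finset.sum_congr rfl fun b _ => Finset.sum_congr rfl fun a _ => by
    simp [star_star]; ring

end Aux

/-- Any gramian generated by the stable system lies in the cone `𝒞`,
i.e. `[A B] V [A B]ᴴ = [I 0] V [I 0]ᴴ` and `V ⪰ 0`. -/
theorem gramian_mem_cone {n m : ℕ}
    (A : Matrix (Fin n) (Fin n) ℂ) (B : Matrix (Fin n) (Fin m) ℂ)
    (hA : spectralRadius ℂ A < 1)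
    (w : ℕ → Fin m → ℂ) (hw : Summable (fun k => ∑ i, ‖w k i‖ ^ 2))
    (x : ℕ → Fin n → ℂ) (hx0 : x 0 = 0)
    (hx : ∀ k, x (k + 1) = A.mulVec (x k) + B.mulVec (w k))
    (V : Matrix (Fin n ⊕ Fin m) (Fin n ⊕ Fin m) ℂ)
    (hV : V = ∑' k, outer (Sum.elim (x k) (w k))) :
    (fromCols A B) * V * (fromCols A B)ᴴ =
        (fromCols (1 : Matrix (Fin n) (Fin n) ℂ) (0 : Matrix (Fin n) (Fin m) ℂ)) * V *
          (fromCols (1 : Matrix (Fin n) (Fin n) ℂ) (0 : Matrix (Fin n) (Fin m) ℂ))ᴴ ∧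
      V.PosSemidef := by
  classical
  -- move to the Euclidean-space operator
  set L : EuclideanSpace ℂ (Fin n) →L[ℂ] EuclideanSpace ℂ (Fin n) :=
    toEuclideanCLM (𝕜 := ℂ) (n := Fin n) A with hLdef
  have hL : spectralRadius ℂ L < 1 := by
    unfold spectralRadius
    rw [hLdef, AlgEquiv.spectrum_eq (f := (toEuclideanCLM (𝕜 := ℂ) (n := Fin n)))]
    exact hA
  -- some power of L has norm < 1 (Gelfand's formula)
  obtain ⟨N, hN1, hLN⟩ : ∃ N : ℕ, 1 ≤ N ∧ ‖L ^ N‖ < 1 := by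
    have hg := spectrum.pow_nnnorm_pow_one_div_tendsto_nhds_spectralRadius L
    have hev : ∀ᶠ N : ℕ in Filter.atTop,
        ((‖L ^ N‖₊ : ENNReal) ^ (1 / (N:ℝ))) < 1 := hg.eventually_lt_const hL
    obtain ⟨N, hr, hN1⟩ := (hev.and (Filter.eventually_ge_atTop 1)).exists
    refine ⟨N, hN1, ?_⟩
    by_contra hc
    push_neg at hc
    have h1 : (1 : ENNReal) ≤ (‖L ^ N‖₊ : ENNReal) := by
      rw [ENNReal.one_le_coe_iff]
      exact_mod_cast hc
    have : (1 : ENNReal) ≤ ((‖L ^ N‖₊ : ENNReal) ^ (1 / (N:ℝ))) := by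
      calc (1 : ENNReal) = 1 ^ (1 / (N:ℝ)) := by rw [ENNReal.one_rpow]
      _ ≤ _ := ENNReal.rpow_le_rpow h1 (by positivity)
    exact absurd hr (not_lt.mpr this)
  -- Euclidean versions of the sequences
  set xE : ℕ → EuclideanSpace ℂ (Fin n) :=
    fun k => (WithLp.equiv 2 (Fin n → ℂ)).symm (x k) with hxE
  set u : ℕ → EuclideanSpace ℂ (Fin n) :=
    fun k => (WithLp.equiv 2 (Fin n → ℂ)).symm (B *ᵥ w k) with hu
  have hxE0 : xE 0 = 0 := by
    rw [hxE]; simp [hx0]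
  have hxrec : ∀ k, xE (k + 1) = L (xE k) + u k := by
    intro k
    rw [hxE, hLdef]
    simp only [hx k, WithLp.equiv_symm_apply, WithLp.toLp_add]
    rw [toEuclideanCLM_toLp]
    simp [Matrix.toLin'_apply, hu, WithLp.equiv_symm_apply]
  -- the input is ℓ²
  have husq : Summable (fun k => ‖u k‖ ^ 2) := by
    set Kb : ℝ := ∑ i, (∑ j, ‖B i j‖) ^ 2 with hKb
    refine Summable.of_nonneg_of_le (fun k => by positivity) (fun k => ?_)
      (hw.mul_left Kb)
    have hWnn : (0:ℝ) ≤ ∑ j, ‖w k j‖ ^ 2 := Finset.sum_nonneg fun j _ => by positivity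
    have hnorm : ‖u k‖ ^ 2 = ∑ i, ‖(B *ᵥ w k) i‖ ^ 2 := by
      rw [show u k = (WithLp.equiv 2 (Fin n → ℂ)).symm (B *ᵥ w k) from rfl,
        EuclideanSpace.norm_eq, Real.sq_sqrt (Finset.sum_nonneg fun i _ => by positivity)]
      rfl
    rw [hnorm]
    have hone : ∀ i, ‖(B *ᵥ w k) i‖ ≤ (∑ j, ‖B i j‖) * Real.sqrt (∑ j, ‖w k j‖ ^ 2) := by
      intro i
      have hwj : ∀ j, ‖w k j‖ ≤ Real.sqrt (∑ j', ‖w k j'‖ ^ 2) := by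
        intro j
        have h1 : ‖w k j‖ ^ 2 ≤ ∑ j', ‖w k j'‖ ^ 2 :=
          Finset.single_le_sum (f := fun j' => ‖w k j'‖ ^ 2)
            (fun j' _ => by positivity) (Finset.mem_univ j)
        have := Real.sqrt_le_sqrt h1
        rwa [Real.sqrt_sq (norm_nonneg _)] at this
      calc ‖(B *ᵥ w k) i‖ = ‖∑ j, B i j * w k j‖ := by
            simp [Matrix.mulVec, dotProduct]
        _ ≤ ∑ j, ‖B i j * w k j‖ := norm_sum_le _ _
        _ = ∑ j, ‖B i j‖ * ‖w k j‖ := by simp [norm_mul]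
        _ ≤ ∑ j, ‖B i j‖ * Real.sqrt (∑ j', ‖w k j'‖ ^ 2) :=
            Finset.sum_le_sum fun j _ =>
              mul_le_mul_of_nonneg_left (hwj j) (norm_nonneg _)
        _ = (∑ j, ‖B i j‖) * Real.sqrt (∑ j', ‖w k j'‖ ^ 2) := by
            rw [Finset.sum_mul]
    calc (∑ i, ‖(B *ᵥ w k) i‖ ^ 2)
        ≤ ∑ i, ((∑ j, ‖B i j‖) * Real.sqrt (∑ j', ‖w k j'‖ ^ 2)) ^ 2 :=
          Finset.sum_le_sum fun i _ => pow_le_pow_left₀ (norm_nonneg _) (hone i) 2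
      _ = ∑ i, (∑ j, ‖B i j‖) ^ 2 * (∑ j', ‖w k j'‖ ^ 2) := by
          refine Finset.sum_congr rfl fun i _ => ?_
          rw [mul_pow, Real.sq_sqrt hWnn]
      _ = Kb * ∑ j', ‖w k j'‖ ^ 2 := by rw [hKb, Finset.sum_mul]
  -- the state is ℓ²
  have hx2 : Summable (fun k => ∑ i, ‖x k i‖ ^ 2) := by
    have := l2_state L N hN1 hLN u husq xE hxE0 hxrec
    refine this.congr fun k => ?_
    rw [show xE k = (WithLp.equiv 2 (Fin n → ℂ)).symm (x k) from rfl,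
      EuclideanSpace.norm_eq, Real.sq_sqrt (Finset.sum_nonneg fun i _ => by positivity)]
    rfl
  -- summability of the outer products
  set F : ℕ → Matrix (Fin n ⊕ Fin m) (Fin n ⊕ Fin m) ℂ :=
    fun k => outer (Sum.elim (x k) (w k)) with hF
  set g : ℕ → ℝ := fun k => (∑ i, ‖x k i‖ ^ 2) + ∑ i, ‖w k i‖ ^ 2 with hg
  have hgs : Summable g := hx2.add hw
  have hvle : ∀ k (i : Fin n ⊕ Fin m), ‖Sum.elim (x k) (w k) i‖ ^ 2 ≤ g k := by
    rintro k (a | b)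
    · calc ‖Sum.elim (x k) (w k) (Sum.inl a)‖ ^ 2 = ‖x k a‖ ^ 2 := by simp
        _ ≤ ∑ i, ‖x k i‖ ^ 2 :=
          Finset.single_le_sum (f := fun i => ‖x k i‖ ^ 2)
            (fun i _ => by positivity) (Finset.mem_univ a)
        _ ≤ g k := le_add_of_nonneg_right (Finset.sum_nonneg fun i _ => by positivity)
    · calc ‖Sum.elim (x k) (w k) (Sum.inr b)‖ ^ 2 = ‖w k b‖ ^ 2 := by simp
        _ ≤ ∑ i, ‖w k i‖ ^ 2 :=
          Finset.single_le_sum (f := fun i => ‖w k i‖ ^ 2)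
            (fun i _ => by positivity) (Finset.mem_univ b)
        _ ≤ g k := le_add_of_nonneg_left (Finset.sum_nonneg fun i _ => by positivity)
  have hFs : Summable F := by
    have hentry : ∀ (i j : Fin n ⊕ Fin m), Summable (fun k => F k i j) := by
      intro i j
      refine Summable.of_norm_bounded hgs fun k => ?_
      have h1 : ‖F k i j‖ = ‖Sum.elim (x k) (w k) i‖ * ‖Sum.elim (x k) (w k) j‖ := by
        simp [hF, outer, norm_mul]
      rw [h1]
      nlinarith [hvle k i, hvle k j, sq_nonneg (‖Sum.elim (x k) (w k) i‖ -
        ‖Sum.elim (x k) (w k) j‖), norm_nonneg (Sum.elim (x k) (w k) i),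
        norm_nonneg (Sum.elim (x k) (w k) j)]
    exact Pi.summable.mpr fun i => Pi.summable.mpr fun j => hentry i j
  have hVsum : HasSum F V := hV ▸ hFs.hasSum
  -- the main identity
  have key : ∀ (M : Matrix (Fin n) (Fin n ⊕ Fin m) ℂ),
      M * V * Mᴴ = ∑' k, outer (M *ᵥ Sum.elim (x k) (w k)) := by
    intro M
    have h1 : conjLM M Mᴴ V = ∑' k, conjLM M Mᴴ (F k) := by
      rw [hV]
      exact (conjLM M Mᴴ).map_tsum hFs
    calc M * V * Mᴴ = conjLM M Mᴴ V := (conjLM_apply M Mᴴ V).symm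
      _ = ∑' k, conjLM M Mᴴ (F k) := h1
      _ = ∑' k, outer (M *ᵥ Sum.elim (x k) (w k)) := by
          refine tsum_congr fun k => ?_
          rw [conjLM_apply, hF, conj_outer]
  have hsummap : ∀ (M : Matrix (Fin n) (Fin n ⊕ Fin m) ℂ),
      Summable (fun k => outer (M *ᵥ Sum.elim (x k) (w k))) := by
    intro M
    have : Summable (fun k => conjLM M Mᴴ (F k)) :=
      hFs.map (conjLM M Mᴴ).toLinearMap.toAddMonoidHom (conjLM M Mᴴ).continuous
    refine this.congr fun k => ?_
    rw [conjLM_apply, hF, conj_outer]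
  constructor
  · -- the gramian identity
    have hLHS : (fromCols A B) * V * (fromCols A B)ᴴ = ∑' k, outer (x (k + 1)) := by
      rw [key]
      refine tsum_congr fun k => ?_
      rw [fromCols_mulVec_sumElim, ← hx k]
    have hRHS : (fromCols (1 : Matrix (Fin n) (Fin n) ℂ) (0 : Matrix (Fin n) (Fin m) ℂ)) * V *
        (fromCols (1 : Matrix (Fin n) (Fin n) ℂ) (0 : Matrix (Fin n) (Fin m) ℂ))ᴴ =
        ∑' k, outer (x k) := by
      rw [key]
      refine tsum_congr fun k => ?_
      rw [fromCols_mulVec_sumElim]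
      simp
    rw [hLHS, hRHS]
    have hsum : Summable (fun k => outer (x k)) := by
      have := hsummap (fromCols (1 : Matrix (Fin n) (Fin n) ℂ) (0 : Matrix (Fin n) (Fin m) ℂ))
      refine this.congr fun k => ?_
      rw [fromCols_mulVec_sumElim]
      simp
    rw [hsum.tsum_eq_zero_add, hx0, outer_zero, zero_add]
  · -- positive semidefiniteness
    rw [Matrix.posSemidef_iff_dotProduct_mulVec]
    constructor
    · -- hermitian
      have hmap : HasSum (fun k => star (F k)) (star V) :=
        hVsum.map (starAddEquiv : Matrix (Fin n ⊕ Fin m) (Fin n ⊕ Fin m) ℂ ≃+ _).toAddMonoidHom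
          continuous_star
      have hsame : (fun k => star (F k)) = F := by
        funext k
        show star (F k) = F k
        rw [Matrix.star_eq_conjTranspose, hF, outer_herm]
      rw [hsame] at hmap
      show Vᴴ = V
      rw [← Matrix.star_eq_conjTranspose]
      exact hmap.unique hVsum
    · -- nonnegativity of the quadratic form
      intro y
      have h1 : quadLM y V = ∑' k, quadLM y (F k) := by
        rw [hV]
        exact (quadLM y).map_tsum hFs
      have h2 : star y ⬝ᵥ V *ᵥ y =
          ∑' k, (star (star y ⬝ᵥ Sum.elim (x k) (w k)) * (star y ⬝ᵥ Sum.elim (x k) (w k))) := by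
        rw [← quadLM_apply, h1]
        exact tsum_congr fun k => by rw [hF, quad_outer]
      rw [h2]
      exact tsum_nonneg fun k => star_mul_self_nonneg _
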